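/- Let n ≥ 1 be an integer and a > 0. For ε > 0 set b = −(2 + ε)a and α*ₙ(ε) = (ε/n)^{1/3}. Then as ε → 0⁺, the modulus of the OWR convergence factor with overlap n at s = 0 and β = −α*ₙ satisfies |ρ_n(0, α*ₙ(ε), −α*ₙ(ε))| = 1 − 4 n^{1/3} ε^{1/6} + O(ε^{1/3}); that is, there exist constants C, ε₀ > 0 such that ||ρ_n(0, α*ₙ(ε), −α*ₙ(ε))| − (1 − 4 n^{1/3} ε^{1/6})| ≤ C ε^{1/3} for all 0 < ε < ε₀. -/

import Mathlib

/-- `λ₁(0) = (2 + ε + √(4ε + ε²))/2`, the real root greater than 1 of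
`a y² + b y + a = 0` with `b = -(2 + ε)a`. -/
noncomputable def lam1Zero (ε : ℝ) : ℝ :=
  (2 + ε + Real.sqrt (4 * ε + ε ^ 2)) / 2

set_option maxHeartbeats 1000000 in
private lemma key_est (t m N μ α P : ℝ) (ht : 0 < t) (hm : 1 ≤ m) (hmN : m ≤ N)
    (hNt : N * t ≤ 1/2) (hμ1 : t^3 ≤ μ) (hμ2 : μ ≤ t^3 + t^6)
    (hα : α = t^2 / m) (hP1 : 1 - 2*t^2 ≤ P) (hP2 : P ≤ 1) :
    |((α - μ)/(α + μ + α*μ))^2 * P - (1 - 4*m*t)| ≤ (20*N^2 + 8*N + 2) * t^2 := by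
  have hm0 : 0 < m := lt_of_lt_of_le one_pos hm
  have hN1 : 1 ≤ N := hm.trans hmN
  have ht1 : t ≤ 1/2 := by nlinarith
  have ht31 : t^3 ≤ 1 := by nlinarith
  have ht63 : t^6 ≤ t^3 := by nlinarith [pow_pos ht 3, sq_nonneg (t^3)]
  have hN0 : (0:ℝ) ≤ N := by linarith
  have ht2le : t^2 ≤ 1 := by nlinarith
  have hμ0 : 0 < μ := lt_of_lt_of_le (by positivity) hμ1
  have hα0 : 0 < α := by rw [hα]; positivity
  have hD0 : 0 < α + μ + α*μ := by positivity
  set D := α + μ + α*μ with hDdef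
  set r := (α - μ)/D with hrdef
  have hmα : m * α = t^2 := by rw [hα]; field_simp
  have hαt : α ≤ t^2 := by rw [hα]; rw [div_le_iff₀ hm0]; nlinarith
  have hαD : t^2/m ≤ D := by
    rw [div_le_iff₀ hm0]
    nlinarith
  have hμ2' : μ ≤ 2*t^3 := by nlinarith
  have hmt : m * t ≤ 1/2 := by nlinarith
  have hr1 : |r| ≤ 1 := by
    rw [hrdef, abs_div, abs_of_pos hD0, div_le_one hD0, abs_le]
    constructor <;> nlinarith
  have key1 : r - (1 - 2*m*t) = ((α - μ) - (1-2*m*t)*D)/D := by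
    rw [hrdef]; field_simp
  have hNm : |(α - μ) - (1-2*m*t)*D| ≤ (8*N+4)*t^4 := by
    have expand : (α - μ) - (1-2*m*t)*D = 2*(t^3 - μ) + μ*(2*m*t - α + 2*m*t*α) := by
      rw [hDdef]; linear_combination (2*t) * hmα
    rw [expand, abs_le]
    have h1 : |t^3 - μ| ≤ t^6 := abs_le.mpr ⟨by linarith, by linarith [(pow_pos ht 6).le]⟩
    have h2 : |2*m*t - α + 2*m*t*α| ≤ (4*N+1)*t := by
      have htt : t^2 ≤ t := by nlinarith
      have hta : α ≤ t := hαt.trans htt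
      have hmtα : m*t*α ≤ t := by nlinarith [mul_le_mul hmt hta hα0.le (by norm_num : (0:ℝ) ≤ 1/2)]
      have hmtN : m*t ≤ N*t := by nlinarith
      rw [abs_le]
      constructor <;> nlinarith
    have h3 : t^6 ≤ t^4 := by nlinarith [pow_pos ht 2, pow_pos ht 4, sq_nonneg (t^2 - t^3)]
    rw [abs_le] at h1 h2
    constructor <;> nlinarith [mul_le_mul_of_nonneg_left h2.2 hμ0.le,
      mul_le_mul_of_nonneg_left h2.1 hμ0.le, pow_pos ht 4]
  have hrc : |r - (1 - 2*m*t)| ≤ (8*N+4)*N*t^2 := by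
    rw [key1, abs_div, abs_of_pos hD0]
    have h8 : (0:ℝ) ≤ 8*N+4 := by linarith
    have step : ((8*N+4)*t^4) / (t^2/m) = (8*N+4)*m*t^2 := by field_simp
    have hfin := mul_le_mul_of_nonneg_right (mul_le_mul_of_nonneg_left hmN h8)
      (pow_pos ht 2).le
    calc |(α - μ) - (1-2*m*t)*D| / D ≤ ((8*N+4)*t^4) / (t^2/m) :=
          div_le_div₀ (by positivity) hNm (by positivity) hαD
      _ = (8*N+4)*m*t^2 := step
      _ ≤ (8*N+4)*N*t^2 := by linarith
  -- final assembly
  have hc : |1 - 2*m*t| ≤ 1 := abs_le.mpr ⟨by linarith, by linarith [(mul_pos hm0 ht).le]⟩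
  have hPa : |P| ≤ 1 := abs_le.mpr ⟨by linarith, hP2⟩
  have hP1' : |P - 1| ≤ 2*t^2 := abs_le.mpr ⟨by linarith, by linarith [(pow_pos ht 2).le]⟩
  have hrc2 : |r + (1 - 2*m*t)| ≤ 2 := by
    calc |r + (1 - 2*m*t)| ≤ |r| + |1 - 2*m*t| := abs_add_le _ _
      _ ≤ 2 := by linarith
  have hBnn : (0:ℝ) ≤ (8*N+4)*N*t^2 :=
    mul_nonneg (mul_nonneg (by linarith) hN0) (pow_pos ht 2).le
  have T1 : |(r - (1-2*m*t))*(r + (1-2*m*t))*P| ≤ (8*N+4)*N*t^2*2 := by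
    rw [abs_mul, abs_mul]
    have h := mul_le_mul (mul_le_mul hrc hrc2 (abs_nonneg _) hBnn) hPa (abs_nonneg _)
      (by linarith)
    calc |r - (1-2*m*t)| * |r + (1-2*m*t)| * |P| ≤ (8*N+4)*N*t^2*2*1 := h
      _ = (8*N+4)*N*t^2*2 := by ring
  have hm2 : m^2 ≤ N^2 := by nlinarith
  have T2 : |4*m^2*t^2*P| ≤ 4*N^2*t^2 := by
    rw [abs_mul]
    have h4 : |4*m^2*t^2| ≤ 4*N^2*t^2 := by
      rw [abs_of_nonneg (by positivity)]
      nlinarith [(pow_pos ht 2).le]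
    have h := mul_le_mul h4 hPa (abs_nonneg _) (by positivity)
    linarith
  have T3 : |(1-4*m*t)*(P-1)| ≤ 2*t^2 := by
    rw [abs_mul]
    have h5 : |1-4*m*t| ≤ 1 := abs_le.mpr ⟨by linarith, by linarith [(mul_pos hm0 ht).le]⟩
    have h := mul_le_mul h5 hP1' (abs_nonneg _) zero_le_one
    linarith
  have expand2 : r^2*P - (1-4*m*t)
      = (r - (1-2*m*t))*(r + (1-2*m*t))*P + (4*m^2*t^2)*P + (1-4*m*t)*(P-1) := by ring
  have hre : ((α - μ)/(α + μ + α*μ))^2 * P = r^2 * P := by rw [hrdef]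
  rw [hre, expand2]
  calc |(r - (1-2*m*t))*(r + (1-2*m*t))*P + (4*m^2*t^2)*P + (1-4*m*t)*(P-1)|
      ≤ |(r - (1-2*m*t))*(r + (1-2*m*t))*P| + |(4*m^2*t^2)*P| + |(1-4*m*t)*(P-1)| :=
        (abs_add_le _ _).trans (add_le_add_left (abs_add_le _ _) _)
    _ ≤ (8*N+4)*N*t^2*2 + 4*N^2*t^2 + 2*t^2 := by
        have T2' : |(4*m^2*t^2)*P| ≤ 4*N^2*t^2 := by
          have : (4*m^2*t^2)*P = 4*m^2*t^2*P := by ring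
          rw [this]; exact T2
        linarith [T1, T2', T3]
    _ ≤ (20*N^2 + 8*N + 2) * t^2 := by nlinarith [(pow_pos ht 2).le]

set_option maxHeartbeats 1000000 in
/-- For an integer overlap `n ≥ 1` and `a > 0`, with `b = -(2 + ε)a` and the asymptotically
optimized parameter `α*ₙ(ε) = (ε/n)^{1/3}` (and `β = -α*ₙ`), the modulus of the OWR
convergence factor at `s = 0`, namely
`|ρ_n(0, α*ₙ, -α*ₙ)| = ((α*ₙ+1-λ₁(0))/((1+α*ₙ)λ₁(0)-1))² (1/λ₁(0)²)ⁿ`, satisfies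
`|ρ_n(0, α*ₙ(ε), -α*ₙ(ε))| = 1 - 4 n^{1/3} ε^{1/6} + O(ε^{1/3})` as `ε → 0⁺`. -/
theorem rhon_optimized_asymptotics (a : ℝ) (n : ℕ) (hn : 1 ≤ n) (ha : 0 < a) :
    ∃ C > (0 : ℝ), ∃ ε₀ > (0 : ℝ), ∀ ε : ℝ, 0 < ε → ε < ε₀ →
      |(((ε / n) ^ ((1 : ℝ) / 3) + 1 - lam1Zero ε) /
            ((1 + (ε / n) ^ ((1 : ℝ) / 3)) * lam1Zero ε - 1)) ^ 2
          * (1 / (lam1Zero ε) ^ 2) ^ n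
        - (1 - 4 * (n : ℝ) ^ ((1 : ℝ) / 3) * ε ^ ((1 : ℝ) / 6))| ≤ C * ε ^ ((1 : ℝ) / 3) := by
  have hn0 : (0:ℝ) < n := by exact_mod_cast Nat.pos_of_ne_zero (by omega)
  have hn1 : (1:ℝ) ≤ n := by exact_mod_cast hn
  refine ⟨20*(n:ℝ)^2 + 8*n + 2, by positivity, (1/(2*n))^6, by positivity, ?_⟩
  intro ε hε hε₀
  set t : ℝ := ε ^ ((1:ℝ)/6) with htdef
  set m : ℝ := (n:ℝ) ^ ((1:ℝ)/3) with hmdef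
  have ht0 : 0 < t := Real.rpow_pos_of_pos hε _
  -- t < 1/(2n)
  have htlt : t < 1/(2*(n:ℝ)) := by
    have h1 : ε ^ ((1:ℝ)/6) < ((1/(2*(n:ℝ)))^6) ^ ((1:ℝ)/6) :=
      Real.rpow_lt_rpow hε.le hε₀ (by norm_num)
    have h2 : ((1/(2*(n:ℝ)))^6 : ℝ) ^ ((1:ℝ)/6) = 1/(2*(n:ℝ)) := by
      rw [← Real.rpow_natCast (1/(2*(n:ℝ))) 6, ← Real.rpow_mul (by positivity)]
      norm_num
    rw [h2] at h1
    exact h1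
  have hNt : (n:ℝ) * t ≤ 1/2 := by
    have := mul_lt_mul_of_pos_left htlt hn0
    rw [mul_one_div] at this
    have h2 : (n:ℝ) / (2*(n:ℝ)) = 1/2 := by field_simp
    rw [h2] at this
    exact this.le
  -- rpow identities
  have ht2 : ε ^ ((1:ℝ)/3) = t^2 := by
    rw [htdef, ← Real.rpow_natCast (ε ^ ((1:ℝ)/6)) 2, ← Real.rpow_mul hε.le]
    norm_num
  have ht3 : Real.sqrt ε = t^3 := by
    rw [htdef, ← Real.rpow_natCast (ε ^ ((1:ℝ)/6)) 3, ← Real.rpow_mul hε.le,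
      Real.sqrt_eq_rpow]
    norm_num
  have ht6 : ε = t^6 := by
    rw [htdef, ← Real.rpow_natCast (ε ^ ((1:ℝ)/6)) 6, ← Real.rpow_mul hε.le]
    norm_num
  have hαeq : (ε/(n:ℝ)) ^ ((1:ℝ)/3) = t^2 / m := by
    rw [Real.div_rpow hε.le hn0.le, ht2, hmdef]
  have hm1 : 1 ≤ m := Real.one_le_rpow hn1 (by norm_num)
  have hmN : m ≤ (n:ℝ) := by
    have := Real.rpow_le_rpow_of_exponent_le hn1 (show (1:ℝ)/3 ≤ 1 by norm_num)
    rwa [Real.rpow_one] at this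
  -- μ and lam1Zero
  set μ : ℝ := (ε + Real.sqrt (4*ε + ε^2))/2 with hμdef
  have hlam : lam1Zero ε = 1 + μ := by rw [lam1Zero, hμdef]; ring
  have hsqlb : 2*Real.sqrt ε ≤ Real.sqrt (4*ε + ε^2) := by
    have h4 : Real.sqrt (4*ε) = 2*Real.sqrt ε := by
      rw [show (4:ℝ)*ε = 2^2*ε by norm_num, Real.sqrt_mul (by positivity),
        Real.sqrt_sq (by norm_num)]
    rw [← h4]
    exact Real.sqrt_le_sqrt (by nlinarith)
  have hsqub : Real.sqrt (4*ε + ε^2) ≤ 2*Real.sqrt ε + ε := by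
    have h : 4*ε + ε^2 ≤ (2*Real.sqrt ε + ε)^2 := by
      nlinarith [Real.sq_sqrt hε.le, Real.sqrt_nonneg ε, mul_pos hε (Real.sqrt_pos.mpr hε)]
    calc Real.sqrt (4*ε + ε^2) ≤ Real.sqrt ((2*Real.sqrt ε + ε)^2) := Real.sqrt_le_sqrt h
      _ = 2*Real.sqrt ε + ε := Real.sqrt_sq (by positivity)
  have hμ1 : t^3 ≤ μ := by rw [hμdef, ← ht3]; linarith
  have hμ2 : μ ≤ t^3 + t^6 := by rw [hμdef, ← ht3, ← ht6]; linarith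
  -- P bounds
  have hμ0 : 0 < μ := lt_of_lt_of_le (by positivity) hμ1
  have hlam0 : (0:ℝ) < lam1Zero ε := by rw [hlam]; linarith
  set P : ℝ := (1 / (lam1Zero ε)^2) ^ n with hPdef
  have hP2 : P ≤ 1 := by
    apply pow_le_one₀ (by positivity)
    rw [div_le_one (by positivity)]
    nlinarith
  have ht1 : t ≤ 1/2 := by
    have h := mul_le_mul_of_nonneg_right hn1 ht0.le
    rw [one_mul] at h
    linarith
  have ht3b : t^3 ≤ (1/2:ℝ)^3 := pow_le_pow_left₀ ht0.le ht1 3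
  have ht6b : t^6 ≤ (1/2:ℝ)^6 := pow_le_pow_left₀ ht0.le ht1 6
  have hμsmall : μ ≤ 1/2 := by norm_num at ht3b ht6b; linarith
  have hP1 : 1 - 2*t^2 ≤ P := by
    have hstep : (1 - μ)^(2*n) ≤ P := by
      rw [hPdef, show (1:ℝ)/(lam1Zero ε)^2 = (1/lam1Zero ε)^2 by rw [div_pow, one_pow],
        ← pow_mul]
      apply pow_le_pow_left₀ (by linarith)
      have hmul : (1-μ)*(lam1Zero ε) ≤ 1 := by rw [hlam]; nlinarith
      calc 1 - μ ≤ 1/(lam1Zero ε) := (le_div_iff₀ hlam0).mpr (by linarith [hmul])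
        _ = 1/lam1Zero ε := rfl
    have hbern : 1 + ((2*n:ℕ):ℝ) * (-μ) ≤ (1 + (-μ))^(2*n) :=
      one_add_mul_le_pow (by linarith) (2*n)
    rw [show (1:ℝ) + -μ = 1 - μ by ring] at hbern
    push_cast at hbern
    have h2nμ : 2*(n:ℝ) * μ ≤ 2*t^2 := by
      have hμ2' : μ ≤ 2*t^3 := by nlinarith [pow_pos ht0 3, sq_nonneg (t^3)]
      nlinarith [pow_pos ht0 2, pow_pos ht0 3, hNt, mul_le_mul_of_nonneg_right hNt (pow_pos ht0 2).le]
    linarith [hstep, hbern]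
  -- rewrite goal
  have hnum : (ε/(n:ℝ)) ^ ((1:ℝ)/3) + 1 - lam1Zero ε = t^2/m - μ := by
    rw [hαeq, hlam]; ring
  have hden : (1 + (ε/(n:ℝ)) ^ ((1:ℝ)/3)) * lam1Zero ε - 1 = t^2/m + μ + (t^2/m)*μ := by
    rw [hαeq, hlam]; ring
  rw [hnum, hden, ht2]
  have := key_est t m (n:ℝ) μ (t^2/m) P ht0 hm1 hmN hNt hμ1 hμ2 rfl hP1 hP2
  exact this
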